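/- Let k and n be positive integers and let Q₁, …, Q_k be nonzero complex polynomials of degree at most n, with at least one of degree exactly n. Then there exist nonnegative integers b₂, …, b_k, each no larger than n(k+2), such that Q₁ + b₂Q₂ + ⋯ + b_kQ_k has degree n and has a decomposition QR, where Q divides Q_i for each i ≤ k and R is a squarefree polynomial coprime to each Q_i. -/

import Mathlib

open Polynomial

lemma aux_eval_ne {p q : Polynomial ℂ} (h : IsCoprime p q) (α : ℂ) (hp : p.eval α = 0) :
    q.eval α ≠ 0 := by
  obtain ⟨u, v, huv⟩ := h
  intro hq
  have := congrArg (eval α) huv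
  simp [hp, hq] at this

lemma aux_coprime {p q : Polynomial ℂ}
    (h : ∀ α, p.eval α = 0 → q.eval α ≠ 0) : IsCoprime p q := by
  classical
  rw [← gcd_isUnit_iff]
  by_contra hg
  obtain ⟨α, hα⟩ := Complex.isAlgClosed.exists_root (gcd p q)
    (fun hd => hg (isUnit_iff_degree_eq_zero.mpr hd))
  have hα' : eval α (gcd p q) = 0 := hα
  obtain ⟨c, hc⟩ := gcd_dvd_left p q
  obtain ⟨d, hd⟩ := gcd_dvd_right p q
  exact h α (by rw [hc]; simp [hα']) (by rw [hd]; simp [hα'])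

lemma aux_step {k n : ℕ} (hn : 0 < n) (Qs : Fin k → Polynomial ℂ) (hQ0 : ∀ i, Qs i ≠ 0)
    (hdeg : ∀ i, (Qs i).natDegree ≤ n)
    {S Co R : Polynomial ℂ} (hS : S = Co * R) (hS0 : S ≠ 0) (hSdeg : S.natDegree ≤ n)
    (hRcop : ∀ i, IsCoprime R (Qs i)) (j : Fin k) :
    ∃ t : ℕ, t ≤ n * (k + 2) ∧
      (S + (t : Polynomial ℂ) * Qs j).natDegree = max S.natDegree (Qs j).natDegree ∧
      S + (t : Polynomial ℂ) * Qs j ≠ 0 ∧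
      ∃ C' R', S + (t : Polynomial ℂ) * Qs j = C' * R' ∧ C' ∣ Co ∧ C' ∣ Qs j ∧
        Squarefree R' ∧ ∀ i, IsCoprime R' (Qs i) := by
  classical
  have hC0 : Co ≠ 0 := fun h => hS0 (by rw [hS, h, zero_mul])
  have hR0 : R ≠ 0 := fun h => hS0 (by rw [hS, h, mul_zero])
  set D := gcd Co (Qs j) with hD
  obtain ⟨c, hc⟩ := gcd_dvd_left Co (Qs j)
  obtain ⟨q, hq⟩ := gcd_dvd_right Co (Qs j)
  have hD0 : D ≠ 0 := fun h => hC0 (by rw [hc, ← hD, h, zero_mul])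
  have hc0 : c ≠ 0 := fun h => hC0 (by rw [hc, h, mul_zero])
  have hq0 : q ≠ 0 := fun h => hQ0 j (by rw [hq, h, mul_zero])
  -- c and q are coprime
  have hcq : IsCoprime c q := by
    rw [← gcd_isUnit_iff]
    have h1 : gcd (D * c) (D * q) = normalize D * gcd c q := gcd_mul_left D c q
    rw [← hc, ← hq, ← hD] at h1
    obtain ⟨u, hu⟩ := associated_normalize D
    rw [← hu, mul_assoc] at h1
    have h2 : D * 1 = D * (↑u * gcd c q) := by rw [mul_one]; exact h1
    have h3 : ↑u * gcd c q = 1 := (mul_left_cancel₀ hD0 h2).symm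
    exact isUnit_of_mul_isUnit_right (h3 ▸ isUnit_one)
  set A := c * R with hAdef
  set B := q with hBdef
  have hA : S = D * A := by rw [hS, hc]; ring
  have hQj : Qs j = D * B := hq
  have hA0 : A ≠ 0 := mul_ne_zero hc0 hR0
  have hB0 : B ≠ 0 := hq0
  have hAB : IsCoprime A B := by
    have h1 : IsCoprime R B := by
      have := hRcop j
      rw [hQj] at this
      exact this.of_mul_right_right
    exact hcq.mul_left h1
  have hndS : S.natDegree = D.natDegree + A.natDegree := by rw [hA, natDegree_mul hD0 hA0]
  have hndQ : (Qs j).natDegree = D.natDegree + B.natDegree := by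
    rw [hQj, natDegree_mul hD0 hB0]
  have hAdeg : A.natDegree ≤ n := by omega
  have hBdeg : B.natDegree ≤ n := by have := hdeg j; omega
  -- bad sets
  set Z : Finset ℂ := (∏ i, Qs i).roots.toFinset with hZdef
  have hZcard : Z.card ≤ k * n := by
    calc Z.card ≤ Multiset.card (∏ i, Qs i).roots := Multiset.toFinset_card_le _
      _ ≤ (∏ i, Qs i).natDegree := card_roots' _
      _ = ∑ i, (Qs i).natDegree := natDegree_prod _ _ (fun i _ => hQ0 i)
      _ ≤ ∑ _i : Fin k, n := Finset.sum_le_sum (fun i _ => hdeg i)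
      _ = k * n := by simp [mul_comm]
  set W : Polynomial ℂ := A * derivative B - derivative A * B with hWdef
  have hWdeg : W.natDegree ≤ 2 * n - 1 := by
    have h1 : (A * derivative B).natDegree ≤ A.natDegree + (derivative B).natDegree :=
      natDegree_mul_le
    have h2 : (derivative A * B).natDegree ≤ (derivative A).natDegree + B.natDegree :=
      natDegree_mul_le
    have h3 := natDegree_derivative_le A
    have h4 := natDegree_derivative_le B
    have h5 : W.natDegree ≤ max (A * derivative B).natDegree ((derivative A * B).natDegree) :=
      natDegree_sub_le _ _
    simp only [le_max_iff] at h5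
    omega
  set f : ℂ → ℂ := fun β => -(A.eval β) / (B.eval β) with hfdef
  set sDeg : Finset ℂ :=
    if A.natDegree = B.natDegree then {-(A.leadingCoeff) / B.leadingCoeff} else {0} with hsDeg
  set bad : Finset ℂ := sDeg ∪ Z.image f ∪ W.roots.toFinset.image f with hbad
  have hWroots : W.roots.toFinset.card ≤ 2 * n - 1 := by
    by_cases hW : W = 0
    · simp [hW]
    · calc W.roots.toFinset.card ≤ Multiset.card W.roots := Multiset.toFinset_card_le _
        _ ≤ W.natDegree := card_roots' _
        _ ≤ 2 * n - 1 := hWdeg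
  have hbadcard : bad.card ≤ n * (k + 2) := by
    have h1 : sDeg.card ≤ 1 := by
      rw [hsDeg]; split <;> simp
    have h2 : (Z.image f).card ≤ k * n := le_trans (Finset.card_image_le) hZcard
    have h3 : (W.roots.toFinset.image f).card ≤ 2 * n - 1 :=
      le_trans (Finset.card_image_le) hWroots
    calc bad.card ≤ (sDeg ∪ Z.image f).card + (W.roots.toFinset.image f).card :=
          Finset.card_union_le _ _
      _ ≤ sDeg.card + (Z.image f).card + (W.roots.toFinset.image f).card := by
          have := Finset.card_union_le sDeg (Z.image f); omega
      _ ≤ 1 + k * n + (2 * n - 1) := by omega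
      _ ≤ n * (k + 2) := by
          have h : 2 * n - 1 + 1 = 2 * n := by omega
          nlinarith [h]
  -- find a good natural number t
  set grid : Finset ℂ := (Finset.range (n * (k + 2) + 1)).image (fun t : ℕ => (t : ℂ))
    with hgrid
  have hgridcard : grid.card = n * (k + 2) + 1 := by
    rw [hgrid, Finset.card_image_of_injective _ Nat.cast_injective, Finset.card_range]
  have : ∃ x ∈ grid, x ∉ bad := by
    by_contra h
    push_neg at h
    have hsub : grid ⊆ bad := h
    have := Finset.card_le_card hsub
    omega
  obtain ⟨x, hxg, hxb⟩ := this
  rw [hgrid, Finset.mem_image] at hxg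
  obtain ⟨t, htmem, rfl⟩ := hxg
  rw [Finset.mem_range] at htmem
  set x : ℂ := (t : ℂ) with hxdef
  rw [hbad] at hxb
  simp only [Finset.mem_union, Finset.mem_image, not_or, not_exists, not_and] at hxb
  obtain ⟨⟨hx1, hx2⟩, hx3⟩ := hxb
  set P : Polynomial ℂ := A + C x * B with hPdef
  have hsum : S + (t : Polynomial ℂ) * Qs j = D * P := by
    rw [hA, hQj, hPdef, Polynomial.C_eq_natCast]
    push_cast
    ring
  -- degree of P
  set d : ℕ := max A.natDegree B.natDegree with hd
  have hcoeff : P.coeff d ≠ 0 := by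
    rw [hPdef]
    simp only [coeff_add, coeff_C_mul]
    rcases lt_trichotomy A.natDegree B.natDegree with hlt | heq | hgt
    · have hAz : A.coeff d = 0 := coeff_eq_zero_of_natDegree_lt (by omega)
      have hBlc : B.coeff d = B.leadingCoeff := by
        rw [hd, max_eq_right hlt.le]; rfl
      have hx0 : x ≠ 0 := by
        intro h0
        apply hx1
        rw [hsDeg, if_neg (by omega)]
        simp [h0]
      rw [hAz, hBlc, zero_add]
      exact mul_ne_zero hx0 (leadingCoeff_ne_zero.mpr hB0)
    · have hAlc : A.coeff d = A.leadingCoeff := by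
        rw [hd, heq, max_self, ← heq, coeff_natDegree]
      have hBlc : B.coeff d = B.leadingCoeff := by rw [hd, heq, max_self, coeff_natDegree]
      rw [hAlc, hBlc]
      intro hzero
      apply hx1
      rw [hsDeg, if_pos heq, Finset.mem_singleton]
      have hBlc0 : B.leadingCoeff ≠ 0 := leadingCoeff_ne_zero.mpr hB0
      rw [eq_div_iff hBlc0]
      linear_combination hzero
    · have hBz : B.coeff d = 0 := coeff_eq_zero_of_natDegree_lt (by omega)
      have hAlc : A.coeff d = A.leadingCoeff := by
        rw [hd, max_eq_left hgt.le]; rfl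
      rw [hBz, hAlc, mul_zero, add_zero]
      exact leadingCoeff_ne_zero.mpr hA0
  have hPle : P.natDegree ≤ d := by
    rw [hPdef]
    refine le_trans (natDegree_add_le _ _) ?_
    simp only [max_le_iff]
    constructor
    · omega
    · exact le_trans (natDegree_C_mul_le _ _) (by omega)
  have hPd : P.natDegree = d := le_antisymm hPle (le_natDegree_of_ne_zero hcoeff)
  have hP0 : P ≠ 0 := fun h => hcoeff (by simp [h])
  -- P avoids roots of all Qs i
  have hPZ : ∀ α ∈ Z, P.eval α ≠ 0 := by
    intro α hα h0
    rw [hPdef] at h0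
    simp only [eval_add, eval_mul, eval_C] at h0
    by_cases hBα : B.eval α = 0
    · rw [hBα, mul_zero, add_zero] at h0
      exact aux_eval_ne hAB α h0 hBα
    · apply hx2 α hα
      show -(A.eval α) / (B.eval α) = x
      rw [div_eq_iff hBα]
      linear_combination -h0
  -- P is squarefree
  have hPsq : Squarefree P := by
    have hsep : P.Separable := by
      apply aux_coprime
      intro β hPβ hP'β
      have hderiv : derivative P = derivative A + C x * derivative B := by
        rw [hPdef]; simp [derivative_add, derivative_C_mul]
      rw [hderiv] at hP'β
      simp only [eval_add, eval_mul, eval_C] at hP'β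
      have hPev : P.eval β = 0 := hPβ
      rw [hPdef] at hPβ
      simp only [eval_add, eval_mul, eval_C] at hPβ
      by_cases hBβ : B.eval β = 0
      · rw [hBβ, mul_zero, add_zero] at hPβ
        exact aux_eval_ne hAB β hPβ hBβ
      · have hW0 : W ≠ 0 := by
          intro hW
          have hABeq : A * derivative B = derivative A * B := by
            have := hWdef ▸ hW
            linear_combination this
          have hA' : derivative A = 0 := by
            by_cases hndA : A.natDegree = 0
            · rw [eq_C_of_natDegree_eq_zero hndA]; simp
            · have hdvd : A ∣ derivative A := by
                have : A ∣ derivative A * B := ⟨derivative B, hABeq.symm⟩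
                exact hAB.dvd_of_dvd_mul_right this
              by_contra hA'0
              have h1 := natDegree_le_of_dvd hdvd hA'0
              have h2 := natDegree_derivative_lt hndA
              omega
          have hB' : derivative B = 0 := by
            rw [hA', zero_mul] at hABeq
            exact (mul_eq_zero.mp hABeq).resolve_left hA0
          have hndA : A.natDegree = 0 := natDegree_eq_zero_of_derivative_eq_zero hA'
          have hndB : B.natDegree = 0 := natDegree_eq_zero_of_derivative_eq_zero hB'
          have hndP : P.natDegree = 0 := by omega
          have hc0' : P.eval β = P.coeff 0 := by
            rw [eq_C_of_natDegree_eq_zero hndP]; simp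
          exact hP0 (by rw [eq_C_of_natDegree_eq_zero hndP, ← hc0', hPev, map_zero])
        have hWβ : W.eval β = 0 := by
          rw [hWdef]
          simp only [eval_sub, eval_mul]
          have e1 : A.eval β = -(x * B.eval β) := by linear_combination hPβ
          have e2 : (derivative A).eval β = -(x * (derivative B).eval β) := by
            linear_combination hP'β
          rw [e1, e2]; ring
        apply hx3 β
        · rw [Multiset.mem_toFinset, mem_roots hW0]
          exact hWβ
        · show -(A.eval β) / (B.eval β) = x
          rw [div_eq_iff hBβ]
          linear_combination -hPβ
    exact hsep.squarefree
  -- P coprime to all Qs i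
  have hPcop : ∀ i, IsCoprime P (Qs i) := by
    intro i
    apply aux_coprime
    intro α hPα hQα
    apply hPZ α _ hPα
    rw [hZdef, Multiset.mem_toFinset, mem_roots']
    refine ⟨Finset.prod_ne_zero_iff.mpr (fun i' _ => hQ0 i'), ?_⟩
    rw [IsRoot.def, eval_prod]
    exact Finset.prod_eq_zero (Finset.mem_univ i) hQα
  refine ⟨t, by omega, ?_, ?_, D, P, hsum, gcd_dvd_left _ _, gcd_dvd_right _ _, hPsq, hPcop⟩
  · rw [hsum, natDegree_mul hD0 hP0, hPd, hndS, hndQ, hd]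
    omega
  · rw [hsum]
    exact mul_ne_zero hD0 hP0

lemma aux_build (k n : ℕ) (hk : 0 < k) (hn : 0 < n) (Qs : Fin k → Polynomial ℂ)
    (hQ0 : ∀ i, Qs i ≠ 0) (hdeg : ∀ i, (Qs i).natDegree ≤ n) :
    ∀ j : ℕ, j ≤ k → 1 ≤ j →
    ∃ b : Fin k → ℕ, b ⟨0, hk⟩ = 1 ∧ (∀ i, i ≠ ⟨0, hk⟩ → b i ≤ n * (k + 2)) ∧
      (∀ i : Fin k, j ≤ i.val → b i = 0) ∧
      (∑ i, b i • Qs i) ≠ 0 ∧ (∑ i, b i • Qs i).natDegree ≤ n ∧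
      (∀ i : Fin k, i.val < j → (Qs i).natDegree ≤ (∑ i, b i • Qs i).natDegree) ∧
      ∃ C R, (∑ i, b i • Qs i) = C * R ∧ (∀ i : Fin k, i.val < j → C ∣ Qs i) ∧
        Squarefree R ∧ ∀ i, IsCoprime R (Qs i) := by
  intro j
  induction j with
  | zero => omega
  | succ j ih =>
    intro hjk hj1
    rcases Nat.eq_or_lt_of_le hj1 with h1 | h1
    · -- base case j + 1 = 1, i.e. j = 0
      classical
      have hj0 : j = 0 := by omega
      subst hj0
      set z : Fin k := ⟨0, hk⟩ with hz
      have hsum : (∑ i, (if i = z then 1 else 0 : ℕ) • Qs i) = Qs z := by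
        rw [Finset.sum_eq_single z]
        · simp
        · intro i _ hi; simp [hi]
        · intro h; exact absurd (Finset.mem_univ z) h
      refine ⟨fun i => if i = z then 1 else 0, by simp, ?_, ?_, ?_, ?_, ?_, ?_⟩
      · intro i hi; show (if i = z then 1 else 0) ≤ _; rw [if_neg hi]; omega
      · intro i hi
        have : i ≠ z := by
          intro h; rw [h] at hi; simp [hz] at hi
        simp [this]
      · rw [hsum]; exact hQ0 z
      · rw [hsum]; exact hdeg z
      · intro i hi
        have : i = z := by
          apply Fin.ext; simp [hz]; omega
        rw [hsum, this]
      · refine ⟨Qs z, 1, by rw [hsum, mul_one], ?_, squarefree_one, fun i => isCoprime_one_left⟩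
        intro i hi
        have : i = z := by apply Fin.ext; simp [hz]; omega
        rw [this]
    · -- inductive step: j ≥ 1
      have hj : 1 ≤ j := by omega
      obtain ⟨b, hb0, hbbd, hbsupp, hS0, hSdeg, hSmax, C, R, hCR, hCdvd, hRsq, hRcop⟩ :=
        ih (by omega) hj
      set S := ∑ i, b i • Qs i with hSdef
      set jf : Fin k := ⟨j, by omega⟩ with hjf
      obtain ⟨t, ht, hdeg', hne', C', R', hfac, hC'C, hC'Q, hsq', hcop'⟩ :=
        aux_step hn Qs hQ0 hdeg hCR hS0 hSdeg hRcop jf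
      classical
      have hjfz : jf ≠ ⟨0, hk⟩ := by
        intro h
        have : (jf : ℕ) = 0 := by rw [h]
        simp [hjf] at this
        omega
      have key : (∑ i, (b i + if i = jf then t else 0) • Qs i)
          = S + (t : Polynomial ℂ) * Qs jf := by
        simp only [add_smul]
        rw [Finset.sum_add_distrib, hSdef]
        congr 1
        rw [Finset.sum_eq_single jf]
        · simp [nsmul_eq_mul]
        · intro i _ hi; simp [hi]
        · intro h; exact absurd (Finset.mem_univ jf) h
      have hbjf : b jf = 0 := hbsupp jf (by simp [hjf])
      refine ⟨fun i => b i + if i = jf then t else 0, ?_, ?_, ?_, ?_, ?_, ?_, ?_⟩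
      · simp only [if_neg (Ne.symm hjfz), add_zero]; exact hb0
      · intro i hi
        by_cases hij : i = jf
        · subst hij; simp [hbjf, ht]
        · simp only [if_neg hij, add_zero]; exact hbbd i hi
      · intro i hi
        have h1 : b i = 0 := hbsupp i (by omega)
        have h2 : i ≠ jf := by
          intro h; rw [h] at hi; simp [hjf] at hi
        simp [h1, h2]
      · rw [key]; exact hne'
      · rw [key, hdeg']
        simp only [max_le_iff]
        exact ⟨hSdeg, hdeg jf⟩
      · intro i hi
        rw [key, hdeg']
        rcases Nat.lt_or_ge (i : ℕ) j with h | h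
        · exact le_trans (hSmax i h) (le_max_left _ _)
        · have : i = jf := by apply Fin.ext; simp [hjf]; omega
          rw [this]; exact le_max_right _ _
      · refine ⟨C', R', by rw [key]; exact hfac, ?_, hsq', hcop'⟩
        intro i hi
        rcases Nat.lt_or_ge (i : ℕ) j with h | h
        · exact dvd_trans hC'C (hCdvd i h)
        · have : i = jf := by apply Fin.ext; simp [hjf]; omega
          rw [this]; exact hC'Q

/-- **Lemma 2.9.**  Let `k, n` be positive integers and `Q₁, …, Q_k` nonzero complex
polynomials of degree at most `n`, at least one of degree exactly `n`.  Then there are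
nonnegative integers `b₂, …, b_k`, each at most `n(k+2)`, so that
`Q₁ + b₂ Q₂ + ⋯ + b_k Q_k` has degree `n` and factors as `Q · R` with `Q` dividing each
`Q_i` and `R` squarefree and coprime to each `Q_i`. -/
theorem squarefree_combination (k n : ℕ) (hk : 0 < k) (hn : 0 < n)
    (Qs : Fin k → Polynomial ℂ) (hQ0 : ∀ i, Qs i ≠ 0)
    (hdeg : ∀ i, (Qs i).natDegree ≤ n) (hex : ∃ i, (Qs i).natDegree = n) :
    ∃ b : Fin k → ℕ, b ⟨0, hk⟩ = 1 ∧ (∀ i, i ≠ ⟨0, hk⟩ → b i ≤ n * (k + 2)) ∧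
      (∑ i, b i • Qs i).natDegree = n ∧
      ∃ Q R : Polynomial ℂ, (∑ i, b i • Qs i) = Q * R ∧
        (∀ i, Q ∣ Qs i) ∧ Squarefree R ∧ ∀ i, IsCoprime R (Qs i) := by
  obtain ⟨b, hb0, hbbd, _, _, hSdeg, hSmax, C, R, hCR, hCdvd, hRsq, hRcop⟩ :=
    aux_build k n hk hn Qs hQ0 hdeg k le_rfl hk
  obtain ⟨i0, hi0⟩ := hex
  refine ⟨b, hb0, hbbd, ?_, C, R, hCR, fun i => hCdvd i i.isLt, hRsq, hRcop⟩
  have := hSmax i0 i0.isLt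
  omega
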